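/- Let G(w) = Σ_{i=1}^d (e^{w_i} + e^{−w_i} − 2 − w_i²) for w ∈ ℝ^d. Then for all w, w' ∈ ℝ^d: G(w) − G(w') − ⟨∇G(w'), w − w'⟩ ≥ (1/(36d))·‖w − w'‖₂⁴. -/

import Mathlib

open Real

lemma nonneg_of_deriv_sign (F F' : ℝ → ℝ) (a : ℝ)
    (hF : ∀ x, HasDerivAt F (F' x) x) (hFa : F a = 0)
    (h1 : ∀ x, a ≤ x → 0 ≤ F' x) (h2 : ∀ x, x ≤ a → F' x ≤ 0) :
    ∀ b, 0 ≤ F b := by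
  intro b
  rcases le_total a b with hab | hab
  · have hm : MonotoneOn F (Set.Ici a) := by
      apply monotoneOn_of_deriv_nonneg (convex_Ici a)
        (fun x _ => (hF x).continuousAt.continuousWithinAt)
        (fun x _ => ((hF x).differentiableAt).differentiableWithinAt)
      intro x hx
      rw [(hF x).deriv]
      exact h1 x (le_of_lt (by simpa using hx))
    have := hm (Set.self_mem_Ici) (by exact hab) hab
    linarith [hFa ▸ this]
  · have hm : AntitoneOn F (Set.Iic a) := by
      apply antitoneOn_of_deriv_nonpos (convex_Iic a)
        (fun x _ => (hF x).continuousAt.continuousWithinAt)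
        (fun x _ => ((hF x).differentiableAt).differentiableWithinAt)
      intro x hx
      rw [(hF x).deriv]
      exact h2 x (le_of_lt (by simpa using hx))
    have := hm (by exact hab) (Set.self_mem_Iic) hab
    linarith [hFa ▸ this]

lemma expNegDeriv (x : ℝ) : HasDerivAt (fun y : ℝ => exp (-y)) (-exp (-x)) x := by
  have h := ((hasDerivAt_id x).neg).exp
  simpa using h

lemma sinh_sign_nonneg {x : ℝ} (hx : 0 ≤ x) : 0 ≤ exp x - exp (-x) - 2 * x := by
  have hm : Monotone (fun y : ℝ => exp y - exp (-y) - 2 * y) := by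
    apply monotone_of_hasDerivAt_nonneg (f' := fun y => exp y + exp (-y) - 2)
    · intro y
      have h := ((Real.hasDerivAt_exp y).sub (expNegDeriv y)).sub
        ((hasDerivAt_id y).const_mul 2)
      exact h.congr_deriv (by ring)
    · intro y
      have := add_one_le_exp y
      have := add_one_le_exp (-y)
      simp only [Pi.zero_apply]
      nlinarith
  have := hm hx
  simpa using this

lemma sinh_sign_nonpos {x : ℝ} (hx : x ≤ 0) : exp x - exp (-x) - 2 * x ≤ 0 := by
  have h := sinh_sign_nonneg (x := -x) (by linarith)
  simp only [neg_neg] at h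
  nlinarith

lemma cosh_ge (x : ℝ) : 0 ≤ exp x + exp (-x) - 2 - x ^ 2 := by
  apply nonneg_of_deriv_sign (fun y => exp y + exp (-y) - 2 - y ^ 2)
    (fun y => exp y - exp (-y) - 2 * y) 0
  · intro y
    have h := (((Real.hasDerivAt_exp y).add (expNegDeriv y)).sub
      (hasDerivAt_const y 2)).sub (hasDerivAt_pow 2 y)
    exact h.congr_deriv (by ring)
  · norm_num
  · exact fun x hx => sinh_sign_nonneg hx
  · exact fun x hx => sinh_sign_nonpos hx

/-- coordinatewise bound -/
lemma coord_bound (a b : ℝ) :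
    (b - a) ^ 4 / 36 ≤
      exp b + exp (-b) - 2 - b ^ 2 - (exp a + exp (-a) - 2 - a ^ 2)
        - (exp a - exp (-a) - 2 * a) * (b - a) := by
  have hF : ∀ y : ℝ, 0 ≤ exp y + exp (-y) - 2 - y ^ 2 - (exp a + exp (-a) - 2 - a ^ 2)
      - (exp a - exp (-a) - 2 * a) * (y - a) - (y ^ 4 / 12 - a ^ 3 * y / 3 + a ^ 4 / 4) := by
    have hmono : Monotone (fun y : ℝ => exp y - exp (-y) - 2 * y
        - (exp a - exp (-a) - 2 * a) - (y ^ 3 - a ^ 3) / 3) := by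
      apply monotone_of_hasDerivAt_nonneg
        (f' := fun y => exp y + exp (-y) - 2 - y ^ 2)
      · intro y
        have h := ((((Real.hasDerivAt_exp y).sub (expNegDeriv y)).sub
          ((hasDerivAt_id y).const_mul 2)).sub
          (hasDerivAt_const y (exp a - exp (-a) - 2 * a))).sub
          (((hasDerivAt_pow 3 y).sub (hasDerivAt_const y (a ^ 3))).div_const 3)
        exact h.congr_deriv (by ring)
      · intro y
        simpa using cosh_ge y
    have hmla : (fun y : ℝ => exp y - exp (-y) - 2 * y
        - (exp a - exp (-a) - 2 * a) - (y ^ 3 - a ^ 3) / 3) a = 0 := by ring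
    apply nonneg_of_deriv_sign _
      (fun y => exp y - exp (-y) - 2 * y - (exp a - exp (-a) - 2 * a) - (y ^ 3 - a ^ 3) / 3) a
    · intro y
      have h := (((((Real.hasDerivAt_exp y).add (expNegDeriv y)).sub
        (hasDerivAt_const y 2)).sub (hasDerivAt_pow 2 y)).sub
        (hasDerivAt_const y (exp a + exp (-a) - 2 - a ^ 2))).sub
        ((((hasDerivAt_id y).sub (hasDerivAt_const y a)).const_mul
          (exp a - exp (-a) - 2 * a)))
      have h2 := h.sub ((((hasDerivAt_pow 4 y).div_const 12).sub
        (((hasDerivAt_id y).const_mul (a ^ 3)).div_const 3)).add (hasDerivAt_const y (a ^ 4 / 4)))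
      exact h2.congr_deriv (by ring)
    · ring
    · intro x hx
      have := hmono hx
      simpa using this
    · intro x hx
      have := hmono hx
      simpa using this
  have h := hF b
  nlinarith [sq_nonneg ((b - a) * (b + 2 * a)), h]

/-- For `G(w) = Σᵢ (e^{wᵢ} + e^{−wᵢ} − 2 − wᵢ²)` on `ℝ^d`:
`G(w) − G(w') − ⟨∇G(w'), w − w'⟩ ≥ (1/(36d))·‖w − w'‖⁴`, where
`⟨∇G(w'), w − w'⟩ = Σᵢ (e^{w'ᵢ} − e^{−w'ᵢ} − 2w'ᵢ)(wᵢ − w'ᵢ)`. -/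
theorem stmt16 (d : ℕ) (G : EuclideanSpace ℝ (Fin d) → ℝ)
    (hG : G = fun w => ∑ i, (Real.exp (w i) + Real.exp (-(w i)) - 2 - (w i) ^ 2)) :
    ∀ w w' : EuclideanSpace ℝ (Fin d),
      (1 / (36 * d)) * ‖w - w'‖ ^ 4
        ≤ G w - G w' - ∑ i, (Real.exp (w' i) - Real.exp (-(w' i)) - 2 * w' i) * (w i - w' i) := by
  subst hG
  intro w w'
  have hRHS : ∑ i, (w i - w' i) ^ 4 / 36 ≤
      (∑ i, (exp (w i) + exp (-(w i)) - 2 - (w i) ^ 2))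
        - (∑ i, (exp (w' i) + exp (-(w' i)) - 2 - (w' i) ^ 2))
        - ∑ i, (exp (w' i) - exp (-(w' i)) - 2 * w' i) * (w i - w' i) := by
    rw [← Finset.sum_sub_distrib, ← Finset.sum_sub_distrib]
    refine Finset.sum_le_sum fun i _ => ?_
    have := coord_bound (w' i) (w i)
    linarith
  have hnorm2 : ‖w - w'‖ ^ 2 = ∑ i, (w i - w' i) ^ 2 := by
    rw [EuclideanSpace.norm_eq, Real.sq_sqrt (by positivity)]
    congr 1
    ext i
    simp [sq_abs]
  have hnorm4 : ‖w - w'‖ ^ 4 = (∑ i, (w i - w' i) ^ 2) ^ 2 := by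
    rw [show (4 : ℕ) = 2 * 2 by norm_num, pow_mul, hnorm2]
  have hCS : (∑ i, (w i - w' i) ^ 2) ^ 2 ≤ (d : ℝ) * ∑ i, ((w i - w' i) ^ 2) ^ 2 := by
    have := sq_sum_le_card_mul_sum_sq (s := (Finset.univ : Finset (Fin d)))
      (f := fun i => (w i - w' i) ^ 2)
    simpa using this
  rcases Nat.eq_zero_or_pos d with hd | hd
  · subst hd
    simp [hnorm4]
  · have hd' : (0 : ℝ) < d := by exact_mod_cast hd
    have h1 : (1 / (36 * (d : ℝ))) * ‖w - w'‖ ^ 4 ≤ ∑ i, (w i - w' i) ^ 4 / 36 := by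
      rw [hnorm4]
      have h2 : (1 / (36 * (d : ℝ))) * (∑ i, (w i - w' i) ^ 2) ^ 2
          ≤ (1 / (36 * (d : ℝ))) * ((d : ℝ) * ∑ i, ((w i - w' i) ^ 2) ^ 2) := by
        apply mul_le_mul_of_nonneg_left hCS (by positivity)
      calc (1 / (36 * (d : ℝ))) * (∑ i, (w i - w' i) ^ 2) ^ 2
          ≤ (1 / (36 * (d : ℝ))) * ((d : ℝ) * ∑ i, ((w i - w' i) ^ 2) ^ 2) := h2
        _ = (∑ i, ((w i - w' i) ^ 2) ^ 2) / 36 := by field_simp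
        _ = ∑ i, (w i - w' i) ^ 4 / 36 := by
            rw [Finset.sum_div]; congr 1; ext i; ring
    linarith
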